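/- Let A and B be weighted geometric mean closed Archimedean Φ-algebras with unit elements e and e′ respectively, let C be a Φ-subalgebra of A (a vector sublattice and subalgebra containing e), and let T : C → B be a multiplicative vector lattice homomorphism with T(e) = e′. Let a ∈ A⁺ and r ∈ (0,∞). If a ∈ C and a^r ∈ C, then T(a^r) = (T(a))^r, where a^r is computed in A and (T(a))^r in B via the infimum formula defining real powers. -/

import Mathlib

set_option linter.unusedSectionVars false
set_option linter.unusedVariables false
set_option maxHeartbeats 1000000


/-- The set whose infimum gives the fractional part of the real power `a^r` in a
`Φ`-algebra with unit `1`: with `r̃ = r - ⌊r⌋`, this is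
`{ r̃·θ₁·a + (1-r̃)·θ₂·e : θ₁, θ₂ ∈ (0,∞), θ₁^{r̃}·θ₂^{1-r̃} = 1 }`. -/
def rpowSet {A : Type*} [CommRing A] [Lattice A] [Module ℝ A]
    (a : A) (r : ℝ) : Set A :=
  {x | ∃ θ₁ θ₂ : ℝ, 0 < θ₁ ∧ 0 < θ₂ ∧
      θ₁ ^ (r - (⌊r⌋₊ : ℝ)) * θ₂ ^ (1 - (r - (⌊r⌋₊ : ℝ))) = 1 ∧
      x = ((r - (⌊r⌋₊ : ℝ)) * θ₁) • a + ((1 - (r - (⌊r⌋₊ : ℝ))) * θ₂) • (1 : A)}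

/-- `IsRPow a r b` says that `b = a^r` in the sense of Definition 4.3:
`a^r = a^{⌊r⌋} · inf (rpowSet a r)` (with `a^{⌊r⌋} = e` when `⌊r⌋ = 0`). -/
def IsRPow {A : Type*} [CommRing A] [Lattice A] [Module ℝ A]
    (a : A) (r : ℝ) (b : A) : Prop :=
  ∃ c : A, IsGLB (rpowSet a r) c ∧ b = a ^ ⌊r⌋₊ * c



open Real in
lemma cover_lemma {s ε : ℝ} (hs0 : 0 < s) (hs1 : s < 1) (hε : 0 < ε) :
    ∃ (N : ℕ) (u : Fin (N + 1) → ℝ), (∀ i, 0 < u i) ∧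
      ∀ θ : ℝ, 0 < θ → ∃ i, u i ≤ θ + ε ∧
        u i ^ (-(s / (1 - s))) ≤ θ ^ (-(s / (1 - s))) + ε := by
  classical
  have ht : 0 < 1 - s := by linarith
  set q : ℝ := s / (1 - s) with hqdef
  have hq : 0 < q := div_pos hs0 ht
  have hεq : 0 < ε ^ q := rpow_pos_of_pos hε q
  set x : ℝ := 1 + ε * ε ^ q with hxdef
  have hx1 : 1 < x := by nlinarith
  have hx0 : 0 < x := lt_trans one_pos hx1
  have hx1q : 1 < x ^ (1 / q) := by
    rw [one_lt_rpow_iff hx0.le]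
    exact Or.inl ⟨hx1, by positivity⟩
  obtain ⟨N, hN⟩ := pow_unbounded_of_one_lt (ε ^ (-(1 / q)) / ε) hx1q
  -- the grid
  refine ⟨N, fun i => ε * x ^ ((i : ℕ) / q : ℝ), fun i => by positivity, ?_⟩
  have hgrid : ∀ i : ℕ, (0:ℝ) < ε * x ^ ((i : ℕ) / q : ℝ) := fun i => by positivity
  intro θ hθ
  rcases lt_or_ge θ ε with hθε | hθε
  · -- θ < ε : use index 0
    refine ⟨0, ?_, ?_⟩
    · simp only [Fin.val_zero, Nat.cast_zero, zero_div, Real.rpow_zero, mul_one]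
      linarith
    · have h0 : ε * x ^ (((0:ℕ) : ℝ) / q) = ε := by
        simp [Real.rpow_zero]
      have : θ ^ (-q) + 0 ≤ θ ^ (-q) + ε := by linarith
      calc (ε * x ^ (((0 : Fin (N+1)) : ℕ) / q : ℝ)) ^ (-q) = ε ^ (-q) := by
            simp [Real.rpow_zero]
        _ ≤ θ ^ (-q) := rpow_le_rpow_of_nonpos hθ hθε.le (by linarith)
        _ ≤ θ ^ (-q) + ε := by linarith
  · -- ε ≤ θ
    set P : ℕ → Prop := fun i => ε * x ^ ((i : ℝ) / q) ≤ θ with hPdef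
    have hP0 : P 0 := by
      simp only [hPdef, Nat.cast_zero, zero_div, Real.rpow_zero, mul_one]
      exact hθε
    set k := Nat.findGreatest P N with hkdef
    have hkN : k ≤ N := Nat.findGreatest_le N
    have hPk : P k := Nat.findGreatest_spec (Nat.zero_le N) hP0
    refine ⟨⟨k, Nat.lt_succ_of_le hkN⟩, ?_, ?_⟩
    · exact le_trans hPk (by linarith)
    · rcases eq_or_lt_of_le hkN with hkN' | hkN'
      · -- k = N : the top of the grid is already very small after ^(-q)
        have hub : ε ^ (-(1 / q)) < ε * x ^ ((k : ℝ) / q) := by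
          have : (x ^ (1/q)) ^ N = x ^ ((N : ℝ) / q) := by
            rw [← Real.rpow_natCast (x ^ (1/q)) N, ← Real.rpow_mul hx0.le]
            ring_nf
          calc ε ^ (-(1/q)) = ε * (ε ^ (-(1/q)) / ε) := by field_simp
            _ < ε * (x ^ (1/q)) ^ N := by
                exact mul_lt_mul_of_pos_left hN hε
            _ = ε * x ^ ((k : ℝ) / q) := by rw [this, hkN']
        have hgk : (0:ℝ) < ε * x ^ ((k : ℝ) / q) := hgrid k
        have h1 : (ε * x ^ ((k : ℝ) / q)) ^ (-q) ≤ (ε ^ (-(1/q))) ^ (-q) :=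
          rpow_le_rpow_of_nonpos (rpow_pos_of_pos hε _) hub.le (by linarith)
        have h2 : (ε ^ (-(1/q))) ^ (-q) = ε := by
          rw [← Real.rpow_mul hε.le]
          have : -(1/q) * -q = 1 := by field_simp
          rw [this, Real.rpow_one]
        have h3 : (0:ℝ) < θ ^ (-q) := rpow_pos_of_pos hθ _
        linarith [h1.trans_eq h2]
      · -- k < N : use that P (k+1) fails
        have hnot : ¬ P (k + 1) :=
          Nat.findGreatest_is_greatest (Nat.lt_succ_self k) hkN'
        simp only [hPdef, not_le] at hnot
        have hub : θ < ε * x ^ ((k : ℝ) / q) * x ^ (1 / q) := by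
          have he : ε * x ^ ((↑(k + 1) : ℝ) / q) = ε * x ^ ((k : ℝ) / q) * x ^ (1 / q) := by
            rw [mul_assoc, ← Real.rpow_add hx0]
            push_cast
            ring_nf
          rw [← he]
          exact hnot
        -- so  u k > θ / x^(1/q),  hence u k ^ (-q) ≤ (θ / x^(1/q))^(-q) = θ^(-q) * x
        have hxq : (0:ℝ) < x ^ (1/q) := rpow_pos_of_pos hx0 _
        have hlow : θ * (x ^ (1/q))⁻¹ < ε * x ^ ((k : ℝ) / q) := by
          rw [← div_eq_mul_inv]
          exact (div_lt_iff₀ hxq).2 hub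
        have h1 : (ε * x ^ ((k : ℝ) / q)) ^ (-q) ≤ (θ * (x ^ (1/q))⁻¹) ^ (-q) :=
          rpow_le_rpow_of_nonpos (by positivity) hlow.le (by linarith)
        have h2 : (θ * (x ^ (1/q))⁻¹) ^ (-q) = θ ^ (-q) * x := by
          rw [mul_rpow hθ.le (by positivity), ← Real.rpow_neg_one (x ^ (1/q)),
            ← Real.rpow_mul hx0.le, ← Real.rpow_mul hx0.le]
          have : 1 / q * -1 * -q = 1 := by field_simp
          rw [this, Real.rpow_one]
        have h3 : θ ^ (-q) ≤ ε ^ (-q) :=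
          rpow_le_rpow_of_nonpos hε hθε (by linarith)
        have h4 : ε ^ q * ε ^ (-q) = 1 := by
          rw [← Real.rpow_add hε]; simp
        have h5 : θ ^ (-q) * x = θ ^ (-q) + ε * ε ^ q * θ ^ (-q) := by
          rw [hxdef]; ring
        have h6 : ε * ε ^ q * θ ^ (-q) ≤ ε * (ε ^ q * ε ^ (-q)) := by
          have := mul_le_mul_of_nonneg_left h3 (by positivity : (0:ℝ) ≤ ε * ε ^ q)
          calc ε * ε ^ q * θ ^ (-q) ≤ ε * ε ^ q * ε ^ (-q) := this
            _ = ε * (ε ^ q * ε ^ (-q)) := by ring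
        calc (ε * x ^ ((k : ℝ) / q)) ^ (-q) ≤ θ ^ (-q) * x := h1.trans_eq h2
          _ = θ ^ (-q) + ε * ε ^ q * θ ^ (-q) := h5
          _ ≤ θ ^ (-q) + ε * (ε ^ q * ε ^ (-q)) := by linarith
          _ = θ ^ (-q) + ε := by rw [h4, mul_one]


section VL

variable {A : Type*} [CommRing A] [Lattice A]
  [CovariantClass A A (· + ·) (· ≤ ·)]
  [Algebra ℝ A] [PosSMulMono ℝ A]

lemma smul_mono_coeff {c d : ℝ} (h : c ≤ d) {a : A} (ha : 0 ≤ a) : c • a ≤ d • a := by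
  have h0 : (0:A) ≤ (d - c) • a := by
    have := smul_le_smul_of_nonneg_left ha (sub_nonneg.2 h)
    simpa using this
  have h1 : (0:A) ≤ d • a - c • a := by rw [← sub_smul]; exact h0
  exact sub_nonneg.1 h1

lemma one_nonneg' (hmulpos : ∀ a b : A, 0 ≤ a → 0 ≤ b → 0 ≤ a * b)
    (hfalg : ∀ a b c : A, a ⊓ b = 0 → 0 ≤ c → (c * a) ⊓ b = 0) : (0:A) ≤ 1 := by
  set p : A := (1:A)⁺ with hp
  set m : A := (1:A)⁻ with hm
  have hp0 : 0 ≤ p := posPart_nonneg 1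
  have hm0 : 0 ≤ m := negPart_nonneg 1
  have hdisj : p ⊓ m = 0 := posPart_inf_negPart_eq_zero 1
  have h1 : (m * p) ⊓ m = 0 := hfalg p m m hdisj hm0
  have h2 : (p * m) ⊓ (m * p) = 0 := hfalg m (m * p) p (by rw [inf_comm]; exact h1) hp0
  have h3 : m * p = 0 := by
    rw [mul_comm p m, inf_idem] at h2
    exact h2
  have hsub : p - m = 1 := posPart_sub_negPart 1
  have h4 : m = -(m * m) := by
    calc m = (p - m) * m := by rw [hsub, one_mul]
      _ = m * p - m * m := by ring
      _ = -(m * m) := by rw [h3, zero_sub]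
  have h5 : m ≤ 0 := by
    rw [h4]
    exact neg_nonpos.2 (hmulpos m m hm0 hm0)
  have h6 : m = 0 := le_antisymm h5 hm0
  calc (0:A) ≤ p := hp0
    _ = 1 := by rw [← hsub, h6, sub_zero]

lemma mul_mono_left' (hmulpos : ∀ a b : A, 0 ≤ a → 0 ≤ b → 0 ≤ a * b)
    {d x y : A} (hd : 0 ≤ d) (h : x ≤ y) : d * x ≤ d * y := by
  have h0 : (0:A) ≤ d * (y - x) := hmulpos d (y - x) hd (sub_nonneg.2 h)
  have h1 : (0:A) ≤ d * y - d * x := by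
    rw [show d * y - d * x = d * (y - x) by ring]
    exact h0
  exact sub_nonneg.1 h1

lemma mul_posPart' (hmulpos : ∀ a b : A, 0 ≤ a → 0 ≤ b → 0 ≤ a * b)
    (hfalg : ∀ a b c : A, a ⊓ b = 0 → 0 ≤ c → (c * a) ⊓ b = 0)
    {d : A} (hd : 0 ≤ d) (z : A) : d * (z ⊔ 0) = (d * z) ⊔ 0 := by
  have hzp : z ⊔ 0 = z⁺ := (posPart_def z).symm
  have hzm : (-z) ⊔ 0 = z⁻ := (negPart_def z).symm
  have hu0 : 0 ≤ d * z⁺ := hmulpos d _ hd (posPart_nonneg z)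
  have hv0 : 0 ≤ d * z⁻ := hmulpos d _ hd (negPart_nonneg z)
  have hdisj : (d * z⁺) ⊓ (d * z⁻) = 0 := by
    have h1 : (d * z⁺) ⊓ z⁻ = 0 := hfalg _ _ d (posPart_inf_negPart_eq_zero z) hd
    have h2 : (d * z⁻) ⊓ (d * z⁺) = 0 :=
      hfalg z⁻ (d * z⁺) d (by rw [inf_comm]; exact h1) hd
    rw [inf_comm]
    exact h2
  have hsub : d * z⁺ - d * z⁻ = d * z := by
    rw [show d * z⁺ - d * z⁻ = d * (z⁺ - z⁻) by ring, posPart_sub_negPart]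
  -- now (d*z) ⊔ 0 = d * z⁺
  have hsup : (d * z⁺) ⊔ (d * z⁻) = d * z⁺ + d * z⁻ := by
    have := inf_add_sup (d * z⁺) (d * z⁻)
    rw [hdisj, zero_add] at this
    exact this
  have key : (d * z) ⊔ 0 = d * z⁺ := by
    calc (d * z) ⊔ 0 = (d * z⁺ - d * z⁻) ⊔ (d * z⁻ - d * z⁻) := by
          rw [hsub, sub_self]
      _ = ((d * z⁺) ⊔ (d * z⁻)) - d * z⁻ := by
          rw [sub_eq_add_neg, sub_eq_add_neg, ← sup_add, ← sub_eq_add_neg]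
      _ = d * z⁺ := by rw [hsup]; ring
  rw [key, hzp]

lemma mul_inf' (hmulpos : ∀ a b : A, 0 ≤ a → 0 ≤ b → 0 ≤ a * b)
    (hfalg : ∀ a b c : A, a ⊓ b = 0 → 0 ≤ c → (c * a) ⊓ b = 0)
    {d : A} (hd : 0 ≤ d) (x y : A) : d * (x ⊓ y) = (d * x) ⊓ (d * y) := by
  have hrepr : ∀ u v : A, u ⊓ v = u - ((u - v) ⊔ 0) := by
    intro u v
    have h1 : (u - v) ⊔ 0 = (u ⊔ v) - v := by
      rw [show (0:A) = v - v by ring, sub_eq_add_neg, sub_eq_add_neg, ← sup_add,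
        ← sub_eq_add_neg]
    have h2 : u ⊓ v + (u ⊔ v) = u + v := inf_add_sup u v
    rw [h1]
    have : u - ((u ⊔ v) - v) = u + v - (u ⊔ v) := by ring
    rw [this]
    rw [← h2]
    ring
  rw [hrepr x y, hrepr (d * x) (d * y), mul_sub, mul_posPart' hmulpos hfalg hd,
    show d * (x - y) = d * x - d * y by ring]

end VL

section FinInf

variable {A : Type*} [Lattice A]

def finInf : ∀ {m : ℕ}, (Fin (m + 1) → A) → A
  | 0, f => f 0
  | (_ + 1), f => f 0 ⊓ finInf (fun i => f i.succ)

lemma finInf_le : ∀ {m : ℕ} (f : Fin (m + 1) → A) (i : Fin (m + 1)), finInf f ≤ f i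
  | 0, f, i => by
    have : i = 0 := Fin.fin_one_eq_zero i
    rw [this]; exact le_refl _
  | (m + 1), f, i => by
    rcases Fin.eq_zero_or_eq_succ i with h | ⟨j, rfl⟩
    · rw [h]; exact inf_le_left.trans (le_refl _)
    · exact inf_le_right.trans (finInf_le (fun i => f i.succ) j)

lemma le_finInf : ∀ {m : ℕ} (f : Fin (m + 1) → A) (z : A), (∀ i, z ≤ f i) → z ≤ finInf f
  | 0, f, z, h => h 0
  | (m + 1), f, z, h =>
    le_inf (h 0) (le_finInf (fun i => f i.succ) z (fun i => h i.succ))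

end FinInf

section FinInfMul

variable {A : Type*} [CommRing A] [Lattice A]
  [CovariantClass A A (· + ·) (· ≤ ·)]
  [Algebra ℝ A] [PosSMulMono ℝ A]

lemma mul_finInf' (hmulpos : ∀ a b : A, 0 ≤ a → 0 ≤ b → 0 ≤ a * b)
    (hfalg : ∀ a b c : A, a ⊓ b = 0 → 0 ≤ c → (c * a) ⊓ b = 0)
    {d : A} (hd : 0 ≤ d) : ∀ {m : ℕ} (f : Fin (m + 1) → A),
      d * finInf f = finInf (fun i => d * f i)
  | 0, f => rfl
  | (m + 1), f => by
    show d * (f 0 ⊓ finInf fun i => f i.succ) = (d * f 0) ⊓ finInf fun i => d * f i.succ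
    rw [mul_inf' hmulpos hfalg hd, mul_finInf' hmulpos hfalg hd (fun i => f i.succ)]

end FinInfMul


section Approx

variable {A : Type*} [CommRing A] [Lattice A]
  [CovariantClass A A (· + ·) (· ≤ ·)]
  [Algebra ℝ A] [PosSMulMono ℝ A]

open Real in
lemma approx_lemma (a : A) (ha : 0 ≤ a) (hone : (0:A) ≤ 1) {r : ℝ} {c : A}
    (hglb : IsGLB (rpowSet a r) c)
    (hs0 : 0 < r - (⌊r⌋₊ : ℝ)) (hs1 : r - (⌊r⌋₊ : ℝ) < 1) {ε : ℝ} (hε : 0 < ε) :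
    ∃ (N : ℕ) (u v : Fin (N + 1) → ℝ),
      (∀ i, 0 < u i ∧ 0 < v i ∧
        u i ^ (r - (⌊r⌋₊ : ℝ)) * v i ^ (1 - (r - (⌊r⌋₊ : ℝ))) = 1) ∧
      finInf (fun i => ((r - (⌊r⌋₊ : ℝ)) * u i) • a
          + ((1 - (r - (⌊r⌋₊ : ℝ))) * v i) • (1 : A)) ≤ c + ε • (a + 1) := by
  set s : ℝ := r - (⌊r⌋₊ : ℝ) with hsdef
  set t : ℝ := 1 - s with htdef
  have ht0 : 0 < t := by simp only [htdef]; linarith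
  have ht1 : t ≤ 1 := by simp only [htdef]; linarith
  set q : ℝ := s / t with hqdef
  obtain ⟨N, u, hu, hcov⟩ := cover_lemma hs0 hs1 hε
  set v : Fin (N + 1) → ℝ := fun i => u i ^ (-q) with hvdef
  have hv : ∀ i, 0 < v i := fun i => rpow_pos_of_pos (hu i) _
  have hadm : ∀ i, u i ^ s * v i ^ t = 1 := by
    intro i
    have h1 : v i ^ t = u i ^ (-s) := by
      rw [hvdef, ← Real.rpow_mul (hu i).le]
      congr 1
      rw [hqdef]
      field_simp
    rw [h1, ← Real.rpow_add (hu i)]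
    simp
  refine ⟨N, u, v, fun i => ⟨hu i, hv i, hadm i⟩, ?_⟩
  set F := fun i => (s * u i) • a + (t * v i) • (1 : A) with hFdef
  rw [← sub_le_iff_le_add]
  refine hglb.2 ?_
  rintro y ⟨θ₁, θ₂, h1, h2, hcon, rfl⟩
  rw [sub_le_iff_le_add]
  -- identify θ₂
  have hθ₂ : θ₂ = θ₁ ^ (-q) := by
    have e1 : θ₂ ^ t = θ₁ ^ (-s) := by
      have e0 : θ₂ ^ t = (θ₁ ^ s)⁻¹ := by
        rw [mul_comm] at hcon
        exact eq_inv_of_mul_eq_one_left hcon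
      rw [e0, Real.rpow_neg h1.le]
    have e2 : θ₂ = (θ₂ ^ t) ^ t⁻¹ := by
      rw [← Real.rpow_mul h2.le, mul_inv_cancel₀ ht0.ne', Real.rpow_one]
    rw [e2, e1, ← Real.rpow_mul h1.le]
    congr 1
    rw [hqdef]
    field_simp
  obtain ⟨i, hi1, hi2⟩ := hcov θ₁ h1
  have hvi : v i ≤ θ₂ + ε := by rw [hθ₂, hvdef]; exact hi2
  have c1 : (s * u i) • a ≤ (s * θ₁ + ε) • a := by
    refine smul_mono_coeff ?_ ha
    nlinarith [hu i]
  have c2 : (t * v i) • (1:A) ≤ (t * θ₂ + ε) • (1:A) := by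
    refine smul_mono_coeff ?_ hone
    nlinarith [hv i]
  have hFi : F i ≤ (s * θ₁) • a + (t * θ₂) • (1:A) + ε • (a + 1) := by
    have : (s * θ₁) • a + (t * θ₂) • (1:A) + ε • (a + 1)
        = (s * θ₁ + ε) • a + (t * θ₂ + ε) • (1:A) := by
      rw [add_smul, add_smul, smul_add]
      abel
    rw [this, hFdef]
    exact add_le_add c1 c2
  exact (finInf_le F i).trans hFi

end Approx

section Tlem

variable {A : Type*} [CommRing A] [Lattice A]
  [CovariantClass A A (· + ·) (· ≤ ·)] [Algebra ℝ A] [PosSMulMono ℝ A]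
  {B : Type*} [CommRing B] [Lattice B]
  [CovariantClass B B (· + ·) (· ≤ ·)] [Algebra ℝ B] [PosSMulMono ℝ B]
  {C : Subalgebra ℝ A} {T : C →ₗ[ℝ] B}

lemma T_mono (hCsup : ∀ x y : A, x ∈ C → y ∈ C → x ⊔ y ∈ C)
    (hThom : ∀ (x y : A) (hx : x ∈ C) (hy : y ∈ C),
      T ⟨x ⊔ y, hCsup x y hx hy⟩ = T ⟨x, hx⟩ ⊔ T ⟨y, hy⟩)
    {x y : A} (hx : x ∈ C) (hy : y ∈ C) (h : x ≤ y) :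
    T ⟨x, hx⟩ ≤ T ⟨y, hy⟩ := by
  have hxy : (⟨y, hy⟩ : C) = ⟨x ⊔ y, hCsup x y hx hy⟩ :=
    Subtype.ext (sup_eq_right.2 h).symm
  rw [hxy, hThom x y hx hy]
  exact le_sup_left

lemma C_inf_mem (hCsup : ∀ x y : A, x ∈ C → y ∈ C → x ⊔ y ∈ C)
    {x y : A} (hx : x ∈ C) (hy : y ∈ C) : x ⊓ y ∈ C := by
  have h : x ⊓ y = x + y - (x ⊔ y) := eq_sub_of_add_eq (inf_add_sup x y)
  rw [h]
  exact sub_mem (add_mem hx hy) (hCsup x y hx hy)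

lemma T_inf (hCsup : ∀ x y : A, x ∈ C → y ∈ C → x ⊔ y ∈ C)
    (hThom : ∀ (x y : A) (hx : x ∈ C) (hy : y ∈ C),
      T ⟨x ⊔ y, hCsup x y hx hy⟩ = T ⟨x, hx⟩ ⊔ T ⟨y, hy⟩)
    {x y : A} (hx : x ∈ C) (hy : y ∈ C) (h : x ⊓ y ∈ C) :
    T ⟨x ⊓ y, h⟩ = T ⟨x, hx⟩ ⊓ T ⟨y, hy⟩ := by
  have hnx : -x ∈ C := neg_mem hx
  have hny : -y ∈ C := neg_mem hy
  have e1 : (⟨x ⊓ y, h⟩ : C) = -⟨(-x) ⊔ (-y), hCsup _ _ hnx hny⟩ := by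
    refine Subtype.ext ?_
    show x ⊓ y = -((-x) ⊔ (-y))
    rw [neg_sup, neg_neg, neg_neg]
  rw [e1, map_neg, hThom (-x) (-y) hnx hny]
  have e2 : T ⟨-x, hnx⟩ = -T ⟨x, hx⟩ := by
    have : (⟨-x, hnx⟩ : C) = -⟨x, hx⟩ := rfl
    rw [this, map_neg]
  have e3 : T ⟨-y, hny⟩ = -T ⟨y, hy⟩ := by
    have : (⟨-y, hny⟩ : C) = -⟨y, hy⟩ := rfl
    rw [this, map_neg]
  rw [e2, e3, neg_sup, neg_neg, neg_neg]

lemma finInf_C_mem (hCsup : ∀ x y : A, x ∈ C → y ∈ C → x ⊔ y ∈ C) :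
    ∀ {m : ℕ} (f : Fin (m + 1) → A), (∀ i, f i ∈ C) → finInf f ∈ C
  | 0, f, hf => hf 0
  | (m + 1), f, hf =>
    C_inf_mem hCsup (hf 0)
      (finInf_C_mem hCsup (fun i => f i.succ) (fun i => hf i.succ))

lemma T_finInf (hCsup : ∀ x y : A, x ∈ C → y ∈ C → x ⊔ y ∈ C)
    (hThom : ∀ (x y : A) (hx : x ∈ C) (hy : y ∈ C),
      T ⟨x ⊔ y, hCsup x y hx hy⟩ = T ⟨x, hx⟩ ⊔ T ⟨y, hy⟩) :
    ∀ {m : ℕ} (f : Fin (m + 1) → A) (hf : ∀ i, f i ∈ C)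
      (h : finInf f ∈ C), T ⟨finInf f, h⟩ = finInf (fun i => T ⟨f i, hf i⟩)
  | 0, f, hf, h => by
    show T ⟨f 0, h⟩ = T ⟨f 0, hf 0⟩
    rfl
  | (m + 1), f, hf, h => by
    have h0 : f 0 ∈ C := hf 0
    have h1 : finInf (fun i => f i.succ) ∈ C :=
      finInf_C_mem hCsup _ (fun i => hf i.succ)
    have h' : f 0 ⊓ finInf (fun i => f i.succ) ∈ C := h
    show T ⟨f 0 ⊓ finInf (fun i => f i.succ), h'⟩ = _
    rw [T_inf hCsup hThom h0 h1]
    rw [T_finInf hCsup hThom (fun i => f i.succ) (fun i => hf i.succ) h1]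
    rfl

end Tlem

/-- **Corollary 4.4 (real case).** If `C` is a `Φ`-subalgebra of a weighted geometric mean
closed Archimedean `Φ`-algebra `A`, and `T : C → B` is a multiplicative vector lattice
homomorphism into a weighted geometric mean closed Archimedean `Φ`-algebra `B` with
`T(e) = e'`, then for `a ∈ A⁺` and `r > 0` with `a, a^r ∈ C` one has `T(a^r) = (T a)^r`. -/
theorem stmt13 {A : Type*} [CommRing A] [Lattice A]
    [CovariantClass A A (· + ·) (· ≤ ·)]
    [Algebra ℝ A] [PosSMulMono ℝ A]
    {B : Type*} [CommRing B] [Lattice B]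
    [CovariantClass B B (· + ·) (· ≤ ·)]
    [Algebra ℝ B] [PosSMulMono ℝ B]
    (harchA : ∀ f g : A, (∀ n : ℕ, (n : ℝ) • f ≤ g) → f ≤ 0)
    (hmulposA : ∀ a b : A, 0 ≤ a → 0 ≤ b → 0 ≤ a * b)
    (hfalgA : ∀ a b c : A, a ⊓ b = 0 → 0 ≤ c → (c * a) ⊓ b = 0)
    (hwgmA : ∀ (n : ℕ) (f : Fin n → A) (r : Fin n → ℝ),
      (∀ k, 0 < r k ∧ r k < 1) → (∑ k, r k) = 1 →
      ∃ m, IsGLB {x | ∃ θ : Fin n → ℝ, (∀ k, 0 < θ k) ∧ (∏ k, θ k ^ r k) = 1 ∧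
        x = ∑ k, (r k * θ k) • |f k|} m)
    (harchB : ∀ f g : B, (∀ n : ℕ, (n : ℝ) • f ≤ g) → f ≤ 0)
    (hmulposB : ∀ a b : B, 0 ≤ a → 0 ≤ b → 0 ≤ a * b)
    (hfalgB : ∀ a b c : B, a ⊓ b = 0 → 0 ≤ c → (c * a) ⊓ b = 0)
    (hwgmB : ∀ (n : ℕ) (f : Fin n → B) (r : Fin n → ℝ),
      (∀ k, 0 < r k ∧ r k < 1) → (∑ k, r k) = 1 →
      ∃ m, IsGLB {x | ∃ θ : Fin n → ℝ, (∀ k, 0 < θ k) ∧ (∏ k, θ k ^ r k) = 1 ∧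
        x = ∑ k, (r k * θ k) • |f k|} m)
    (C : Subalgebra ℝ A) (hCsup : ∀ x y : A, x ∈ C → y ∈ C → x ⊔ y ∈ C)
    (T : C →ₗ[ℝ] B)
    (hThom : ∀ (x y : A) (hx : x ∈ C) (hy : y ∈ C),
      T ⟨x ⊔ y, hCsup x y hx hy⟩ = T ⟨x, hx⟩ ⊔ T ⟨y, hy⟩)
    (hTmul : ∀ x y : C, T (x * y) = T x * T y)
    (hTone : T 1 = 1)
    (a : A) (ha : 0 ≤ a) (r : ℝ) (hr : 0 < r)
    (haC : a ∈ C) (b : A) (hb : IsRPow a r b) (hbC : b ∈ C)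
    (b' : B) (hb' : IsRPow (T ⟨a, haC⟩) r b') :
    T ⟨b, hbC⟩ = b' := by
  classical
  obtain ⟨c, hglbA, hbeq⟩ := hb
  obtain ⟨c', hglbB, hbeq'⟩ := hb'
  have honeA : (0:A) ≤ 1 := one_nonneg' hmulposA hfalgA
  have honeB : (0:B) ≤ 1 := one_nonneg' hmulposB hfalgB
  have hpowA : ∀ k : ℕ, (0:A) ≤ a ^ k := by
    intro k; induction k with
    | zero => simpa using honeA
    | succ k ih => rw [pow_succ]; exact hmulposA _ _ ih ha
  have ha' : (0:B) ≤ T ⟨a, haC⟩ := by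
    have h0 : (0:A) ∈ C := zero_mem C
    have h := T_mono hCsup hThom h0 haC ha
    have e : (⟨(0:A), h0⟩ : C) = 0 := rfl
    rwa [e, map_zero] at h
  have hpowB : ∀ k : ℕ, (0:B) ≤ (T ⟨a, haC⟩) ^ k := by
    intro k; induction k with
    | zero => simpa using honeB
    | succ k ih => rw [pow_succ]; exact hmulposB _ _ ih ha'
  have Tpow : ∀ k : ℕ, T (⟨a, haC⟩ ^ k) = (T ⟨a, haC⟩) ^ k := by
    intro k; induction k with
    | zero => simpa using hTone
    | succ k ih => rw [pow_succ, pow_succ, hTmul, ih]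
  have hs0 : (0:ℝ) ≤ r - (⌊r⌋₊ : ℝ) := sub_nonneg.2 (Nat.floor_le hr.le)
  have hs1 : r - (⌊r⌋₊ : ℝ) < 1 := by
    have := Nat.lt_floor_add_one r
    push_cast at this ⊢
    linarith
  rcases eq_or_lt_of_le hs0 with hs | hs
  · -- integer case : rpowSet is the singleton {1}
    have hcA : c = (1:A) := by
      have hset : rpowSet a r = {(1:A)} := by
        ext x
        constructor
        · rintro ⟨θ₁, θ₂, h1, h2, hcon, rfl⟩
          have hθ₂ : θ₂ = 1 := by
            rw [← hs] at hcon
            simpa using hcon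
          rw [Set.mem_singleton_iff, ← hs, hθ₂]
          simp
        · intro hx
          rw [Set.mem_singleton_iff] at hx
          subst hx
          exact ⟨1, 1, one_pos, one_pos, by simp, by rw [← hs]; simp⟩
      exact hglbA.unique (by rw [hset]; exact isGLB_singleton)
    have hcB : c' = (1:B) := by
      have hset : rpowSet (T ⟨a, haC⟩) r = {(1:B)} := by
        ext x
        constructor
        · rintro ⟨θ₁, θ₂, h1, h2, hcon, rfl⟩
          have hθ₂ : θ₂ = 1 := by
            rw [← hs] at hcon
            simpa using hcon
          rw [Set.mem_singleton_iff, ← hs, hθ₂]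
          simp
        · intro hx
          rw [Set.mem_singleton_iff] at hx
          subst hx
          exact ⟨1, 1, one_pos, one_pos, by simp, by rw [← hs]; simp⟩
      exact hglbB.unique (by rw [hset]; exact isGLB_singleton)
    have hbval : (⟨b, hbC⟩ : C) = ⟨a, haC⟩ ^ ⌊r⌋₊ := by
      apply Subtype.ext
      show b = ((⟨a, haC⟩ ^ ⌊r⌋₊ : C) : A)
      rw [hbeq, hcA, mul_one]
      simp
    rw [hbval, Tpow, hbeq', hcB, mul_one]
  · -- main case : 0 < r - ⌊r⌋₊ < 1
    have hw'0 : (0:B) ≤ (T ⟨a, haC⟩) ^ ⌊r⌋₊ * (T ⟨a, haC⟩ + 1) :=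
      hmulposB _ _ (hpowB _) (add_nonneg ha' honeB)
    have memx : ∀ p q : ℝ, p • a + q • (1:A) ∈ C := fun p q =>
      add_mem (C.smul_mem haC p) (C.smul_mem (one_mem C) q)
    have memax : ∀ p q : ℝ, a ^ ⌊r⌋₊ * (p • a + q • (1:A)) ∈ C := fun p q =>
      mul_mem (pow_mem haC ⌊r⌋₊) (memx p q)
    have Timg : ∀ (p q : ℝ) (h : a ^ ⌊r⌋₊ * (p • a + q • (1:A)) ∈ C),
        T ⟨a ^ ⌊r⌋₊ * (p • a + q • (1:A)), h⟩
          = (T ⟨a, haC⟩) ^ ⌊r⌋₊ * (p • T ⟨a, haC⟩ + q • (1:B)) := by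
      intro p q h
      have e : (⟨a ^ ⌊r⌋₊ * (p • a + q • (1:A)), h⟩ : C)
          = ⟨a, haC⟩ ^ ⌊r⌋₊ * (p • ⟨a, haC⟩ + q • (1:C)) := by
        refine Subtype.ext ?_
        simp
      rw [e, hTmul, Tpow, map_add, map_smul, map_smul, hTone]
    have key1 : ∀ ε : ℝ, 0 < ε → T ⟨b, hbC⟩
        ≤ b' + ε • ((T ⟨a, haC⟩) ^ ⌊r⌋₊ * (T ⟨a, haC⟩ + 1)) := by
      intro ε hε
      obtain ⟨N, u, v, hadm, hineq⟩ := approx_lemma (T ⟨a, haC⟩) ha' honeB hglbB hs hs1 hε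
      have hpt : ∀ i, T ⟨b, hbC⟩ ≤ (T ⟨a, haC⟩) ^ ⌊r⌋₊
          * (((r - (⌊r⌋₊:ℝ)) * u i) • T ⟨a, haC⟩
            + ((1 - (r - (⌊r⌋₊:ℝ))) * v i) • (1:B)) := by
        intro i
        have hxS : ((r - (⌊r⌋₊:ℝ)) * u i) • a + ((1 - (r - (⌊r⌋₊:ℝ))) * v i) • (1:A)
            ∈ rpowSet a r := ⟨u i, v i, (hadm i).1, (hadm i).2.1, (hadm i).2.2, rfl⟩
        have hble : b ≤ a ^ ⌊r⌋₊ * (((r - (⌊r⌋₊:ℝ)) * u i) • a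
            + ((1 - (r - (⌊r⌋₊:ℝ))) * v i) • (1:A)) := by
          rw [hbeq]
          exact mul_mono_left' hmulposA (hpowA _) (hglbA.1 hxS)
        have h := T_mono hCsup hThom hbC (memax _ _) hble
        rwa [Timg] at h
      have h2 : T ⟨b, hbC⟩ ≤ finInf (fun i => (T ⟨a, haC⟩) ^ ⌊r⌋₊
          * (((r - (⌊r⌋₊:ℝ)) * u i) • T ⟨a, haC⟩
            + ((1 - (r - (⌊r⌋₊:ℝ))) * v i) • (1:B))) :=
        le_finInf _ _ hpt
      rw [← mul_finInf' hmulposB hfalgB (hpowB ⌊r⌋₊)] at h2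
      calc T ⟨b, hbC⟩ ≤ _ := h2
        _ ≤ (T ⟨a, haC⟩) ^ ⌊r⌋₊ * (c' + ε • (T ⟨a, haC⟩ + 1)) :=
            mul_mono_left' hmulposB (hpowB _) hineq
        _ = b' + ε • ((T ⟨a, haC⟩) ^ ⌊r⌋₊ * (T ⟨a, haC⟩ + 1)) := by
            rw [hbeq', mul_add, mul_smul_comm]
    have key2 : ∀ ε : ℝ, 0 < ε →
        b' ≤ T ⟨b, hbC⟩ + ε • ((T ⟨a, haC⟩) ^ ⌊r⌋₊ * (T ⟨a, haC⟩ + 1)) := by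
      intro ε hε
      obtain ⟨N, u, v, hadm, hineq⟩ := approx_lemma a ha honeA hglbA hs hs1 hε
      have hFmem : ∀ i : Fin (N+1), a ^ ⌊r⌋₊ * (((r - (⌊r⌋₊:ℝ)) * u i) • a
          + ((1 - (r - (⌊r⌋₊:ℝ))) * v i) • (1:A)) ∈ C := fun i => memax _ _
      have hFinC : finInf (fun i => a ^ ⌊r⌋₊ * (((r - (⌊r⌋₊:ℝ)) * u i) • a
          + ((1 - (r - (⌊r⌋₊:ℝ))) * v i) • (1:A))) ∈ C :=
        finInf_C_mem hCsup _ hFmem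
      have hwA : a ^ ⌊r⌋₊ * (a + 1) ∈ C :=
        mul_mem (pow_mem haC ⌊r⌋₊) (add_mem haC (one_mem C))
      have hRHS : b + ε • (a ^ ⌊r⌋₊ * (a + 1)) ∈ C := add_mem hbC (C.smul_mem hwA ε)
      have step : finInf (fun i => a ^ ⌊r⌋₊ * (((r - (⌊r⌋₊:ℝ)) * u i) • a
          + ((1 - (r - (⌊r⌋₊:ℝ))) * v i) • (1:A))) ≤ b + ε • (a ^ ⌊r⌋₊ * (a + 1)) := by
        rw [← mul_finInf' hmulposA hfalgA (hpowA ⌊r⌋₊)]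
        calc a ^ ⌊r⌋₊ * finInf (fun i => ((r - (⌊r⌋₊:ℝ)) * u i) • a
              + ((1 - (r - (⌊r⌋₊:ℝ))) * v i) • (1:A))
            ≤ a ^ ⌊r⌋₊ * (c + ε • (a + 1)) := mul_mono_left' hmulposA (hpowA _) hineq
          _ = b + ε • (a ^ ⌊r⌋₊ * (a + 1)) := by rw [hbeq, mul_add, mul_smul_comm]
      have hT := T_mono hCsup hThom hFinC hRHS step
      have hL : T ⟨_, hFinC⟩ = finInf (fun i => T ⟨a ^ ⌊r⌋₊ * (((r - (⌊r⌋₊:ℝ)) * u i) • a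
          + ((1 - (r - (⌊r⌋₊:ℝ))) * v i) • (1:A)), hFmem i⟩) :=
        T_finInf hCsup hThom _ hFmem hFinC
      have hb'le : b' ≤ finInf (fun i => T ⟨a ^ ⌊r⌋₊ * (((r - (⌊r⌋₊:ℝ)) * u i) • a
          + ((1 - (r - (⌊r⌋₊:ℝ))) * v i) • (1:A)), hFmem i⟩) := by
        refine le_finInf _ _ (fun i => ?_)
        rw [Timg]
        have hyS : ((r - (⌊r⌋₊:ℝ)) * u i) • T ⟨a, haC⟩
            + ((1 - (r - (⌊r⌋₊:ℝ))) * v i) • (1:B) ∈ rpowSet (T ⟨a, haC⟩) r :=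
          ⟨u i, v i, (hadm i).1, (hadm i).2.1, (hadm i).2.2, rfl⟩
        rw [hbeq']
        exact mul_mono_left' hmulposB (hpowB _) (hglbB.1 hyS)
      have hR : T ⟨b + ε • (a ^ ⌊r⌋₊ * (a + 1)), hRHS⟩
          = T ⟨b, hbC⟩ + ε • ((T ⟨a, haC⟩) ^ ⌊r⌋₊ * (T ⟨a, haC⟩ + 1)) := by
        have e : (⟨b + ε • (a ^ ⌊r⌋₊ * (a + 1)), hRHS⟩ : C)
            = ⟨b, hbC⟩ + ε • ⟨a ^ ⌊r⌋₊ * (a + 1), hwA⟩ := rfl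
        rw [e, map_add, map_smul]
        congr 1
        have e2 : (⟨a ^ ⌊r⌋₊ * (a + 1), hwA⟩ : C) = ⟨a, haC⟩ ^ ⌊r⌋₊ * (⟨a, haC⟩ + 1) := by
          refine Subtype.ext ?_
          simp
        rw [e2, hTmul, Tpow, map_add, hTone]
      calc b' ≤ _ := hb'le
        _ = T ⟨_, hFinC⟩ := hL.symm
        _ ≤ T ⟨b + ε • (a ^ ⌊r⌋₊ * (a + 1)), hRHS⟩ := hT
        _ = T ⟨b, hbC⟩ + ε • ((T ⟨a, haC⟩) ^ ⌊r⌋₊ * (T ⟨a, haC⟩ + 1)) := hR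
    have arch : ∀ z : B,
        (∀ ε : ℝ, 0 < ε → z ≤ ε • ((T ⟨a, haC⟩) ^ ⌊r⌋₊ * (T ⟨a, haC⟩ + 1))) → z ≤ 0 := by
      intro z hz
      refine harchB z ((T ⟨a, haC⟩) ^ ⌊r⌋₊ * (T ⟨a, haC⟩ + 1)) (fun k => ?_)
      rcases Nat.eq_zero_or_pos k with rfl | hk
      · simpa using hw'0
      · have hkpos : (0:ℝ) < (k:ℝ) := by exact_mod_cast hk
        have h1 : z ≤ (1 / (k:ℝ)) • ((T ⟨a, haC⟩) ^ ⌊r⌋₊ * (T ⟨a, haC⟩ + 1)) :=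
          hz _ (by positivity)
        have h2 := smul_le_smul_of_nonneg_left h1 hkpos.le
        rwa [smul_smul, mul_one_div_cancel hkpos.ne', one_smul] at h2
    have d1 : T ⟨b, hbC⟩ - b' ≤ 0 := by
      refine arch _ (fun ε hε => ?_)
      have h := key1 ε hε
      rw [add_comm] at h
      exact sub_le_iff_le_add.2 h
    have d2 : b' - T ⟨b, hbC⟩ ≤ 0 := by
      refine arch _ (fun ε hε => ?_)
      have h := key2 ε hε
      rw [add_comm] at h
      exact sub_le_iff_le_add.2 h
    exact le_antisymm (sub_nonpos.1 d1) (sub_nonpos.1 d2)
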